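/- Equivalence of ISC with BCD subtyping extended to products: For all types A and B, the singleton sequent A ⊢ B is derivable in the instantiated ISC system if and only if A ≤ B holds in the BCD subtyping relation with products. -/

import Mathlib

/-- Intersection types: base types, intersection, omega, arrow, product. -/
inductive Ty (X : Type) : Type
  | base : X → Ty X
  | inter : Ty X → Ty X → Ty X
  | omega : Ty X
  | arrow : Ty X → Ty X → Ty X
  | prod : Ty X → Ty X → Ty X

/-- The BCD subtyping relation extended with product types. -/
inductive BCD {X : Type} : Ty X → Ty X → Prop
  | refl (A : Ty X) : BCD A A
  | trans {A B C : Ty X} : BCD A B → BCD B C → BCD A C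
  | omega (A : Ty X) : BCD A .omega
  | inter_l1 (A B : Ty X) : BCD (.inter A B) A
  | inter_l2 (A B : Ty X) : BCD (.inter A B) B
  | inter_dup (A : Ty X) : BCD A (.inter A A)
  | inter_mono {A B C D : Ty X} : BCD A C → BCD B D → BCD (.inter A B) (.inter C D)
  | arrow_mono {A B C D : Ty X} : BCD C A → BCD B D → BCD (.arrow A B) (.arrow C D)
  | arrow_inter (A B C : Ty X) :
      BCD (.inter (.arrow A B) (.arrow A C)) (.arrow A (.inter B C))
  | omega_arrow : BCD .omega (.arrow .omega .omega)
  | prod_mono {A B C D : Ty X} : BCD A C → BCD B D → BCD (.prod A B) (.prod C D)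
  | prod_inter (A B C D : Ty X) :
      BCD (.inter (.prod A B) (.prod C D)) (.prod (.inter A C) (.inter B D))

/-- `A` is an intersection type. -/
def Ty.isInter {X : Type} : Ty X → Prop
  | .inter _ _ => True
  | _ => False

/-- The ISC sequent system instantiated with the constructors
`X`, `Ω`, `→`, `×` (Table 7 of the paper). -/
inductive ISCp {X : Type} : List (Ty X) → Ty X → Prop
  | wk {Γ Δ : List (Ty X)} {C : Ty X} (A : Ty X) (hA : ¬ A.isInter) :
      ISCp (Γ ++ Δ) C → ISCp (Γ ++ A :: Δ) C
  | interR {Γ : List (Ty X)} {A B : Ty X} : ISCp Γ A → ISCp Γ B → ISCp Γ (.inter A B)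
  | interL {Γ Δ : List (Ty X)} {A B C : Ty X} :
      ISCp (Γ ++ A :: B :: Δ) C → ISCp (Γ ++ Ty.inter A B :: Δ) C
  | ax (x : X) : ISCp [.base x] (.base x)
  | omega : ISCp [] .omega
  | arrow (l : List (Ty X × Ty X)) (hl : l ≠ []) (A B : Ty X) :
      (∀ p ∈ l, ISCp [A] p.1) → ISCp (l.map Prod.snd) B →
      ISCp (l.map fun p => Ty.arrow p.1 p.2) (.arrow A B)
  | arrow0 (A : Ty X) {B : Ty X} : ISCp [] B → ISCp [] (.arrow A B)
  | prod (l : List (Ty X × Ty X)) (hl : l ≠ []) (A B : Ty X) :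
      ISCp (l.map Prod.fst) A → ISCp (l.map Prod.snd) B →
      ISCp (l.map fun p => Ty.prod p.1 p.2) (.prod A B)

/-- Iterated intersection `A₁ ∩ … ∩ Aₙ` of a list of types, the empty
intersection being `Ω`. -/
def interList {X : Type} : List (Ty X) → Ty X
  | [] => .omega
  | [A] => A
  | A :: l => .inter A (interList l)
namespace ISCwork

variable {X : Type}

/-- size of a type -/
def tsz : Ty X → ℕ
  | .base _ => 1
  | .inter a b => tsz a + tsz b + 1
  | .omega => 1
  | .arrow a b => tsz a + tsz b + 1
  | .prod a b => tsz a + tsz b + 1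

lemma sz_pos (A : Ty X) : 0 < tsz A := by cases A <;> simp [tsz]

lemma notInter_base (x : X) : ¬ (Ty.base x : Ty X).isInter := by simp [Ty.isInter]
lemma notInter_omega : ¬ (Ty.omega : Ty X).isInter := by simp [Ty.isInter]
lemma notInter_arrow (a b : Ty X) : ¬ (Ty.arrow a b).isInter := by simp [Ty.isInter]
lemma notInter_prod (a b : Ty X) : ¬ (Ty.prod a b).isInter := by simp [Ty.isInter]

/-- full weakening by a single formula -/
lemma weakI (B : Ty X) : ∀ {S1 S2 : List (Ty X)} {C : Ty X},
    ISCp (S1 ++ S2) C → ISCp (S1 ++ B :: S2) C := by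
  induction B with
  | base x => intro S1 S2 C h; exact h.wk _ (notInter_base x)
  | omega => intro S1 S2 C h; exact h.wk _ notInter_omega
  | arrow a b iha ihb => intro S1 S2 C h; exact h.wk _ (notInter_arrow a b)
  | prod a b iha ihb => intro S1 S2 C h; exact h.wk _ (notInter_prod a b)
  | inter P Q ihP ihQ =>
      intro S1 S2 C h
      exact ISCp.interL (ihP (ihQ h))

/-- full weakening by a list -/
lemma weakL (G : List (Ty X)) : ∀ {S1 S2 : List (Ty X)} {C : Ty X},
    ISCp (S1 ++ S2) C → ISCp (S1 ++ G ++ S2) C := by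
  induction G with
  | nil => intro _ _ _ h; simpa using h
  | cons B G ih =>
      intro S1 S2 C h
      have h1 : ISCp (S1 ++ (G ++ S2)) C := by simpa using ih h
      have := weakI B h1
      simpa using this

/-- middle-element decomposition of a list equation -/
lemma mid_eq {α : Type*} : ∀ {l₁ l₂ l₃ l₄ : List α} {a b : α},
    l₁ ++ a :: l₂ = l₃ ++ b :: l₄ →
    (l₁ = l₃ ∧ a = b ∧ l₂ = l₄) ∨
    (∃ t, l₃ = l₁ ++ a :: t ∧ l₂ = t ++ b :: l₄) ∨
    (∃ t, l₁ = l₃ ++ b :: t ∧ l₄ = t ++ a :: l₂) := by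
  intro l₁
  induction l₁ with
  | nil =>
      intro l₂ l₃ l₄ a b h
      cases l₃ with
      | nil => simp_all
      | cons c l₃ =>
          simp only [List.nil_append, List.cons_append, List.cons.injEq] at h
          exact Or.inr (Or.inl ⟨l₃, by simp [h.1, h.2], by simp [h.2]⟩)
  | cons c l₁ ih =>
      intro l₂ l₃ l₄ a b h
      cases l₃ with
      | nil =>
          simp only [List.nil_append, List.cons_append, List.cons.injEq] at h
          exact Or.inr (Or.inr ⟨l₁, by simp [h.1], by simp [h.2]⟩)
      | cons d l₃ =>
          simp only [List.cons_append, List.cons.injEq] at h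
          rcases ih h.2 with ⟨h1, h2, h3⟩ | ⟨t, h1, h2⟩ | ⟨t, h1, h2⟩
          · exact Or.inl ⟨by simp [h.1, h1], h2, h3⟩
          · exact Or.inr (Or.inl ⟨t, by simp [h.1, h1], h2⟩)
          · exact Or.inr (Or.inr ⟨t, by simp [h.1, h1], h2⟩)

end ISCwork
namespace ISCwork

variable {X : Type}

lemma perm_map_ex {α β : Type*} (f : α → β) :
    ∀ {lf m : List β}, lf.Perm m → ∀ l : List α, lf = l.map f →
      ∃ l₂, m = l₂.map f ∧ l.Perm l₂ := by
  intro lf m h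
  induction h with
  | nil =>
      intro l hl
      exact ⟨[], rfl, by simpa [List.map_eq_nil_iff.mp hl.symm] using List.Perm.refl _⟩
  | cons x h ih =>
      intro l hl
      cases l with
      | nil => simp at hl
      | cons a l' =>
          simp only [List.map_cons, List.cons.injEq] at hl
          obtain ⟨l₂, hm, hp⟩ := ih l' hl.2
          exact ⟨a :: l₂, by simp [hm, hl.1], hp.cons a⟩
  | swap x y rest =>
      intro l hl
      match l, hl with
      | a :: b :: l', hl =>
          simp only [List.map_cons, List.cons.injEq] at hl
          exact ⟨b :: a :: l', by simp [hl.1, hl.2.1, hl.2.2], List.Perm.swap b a l'⟩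
  | trans h1 h2 ih1 ih2 =>
      intro l hl
      obtain ⟨l₂, hm, hp⟩ := ih1 l hl
      obtain ⟨l₃, hm', hp'⟩ := ih2 l₂ hm
      exact ⟨l₃, hm', hp.trans hp'⟩

/-- exchange: ISCp is invariant under permutations of the context -/
lemma exch : ∀ {D : List (Ty X)} {C : Ty X}, ISCp D C →
    ∀ {G : List (Ty X)}, D.Perm G → ISCp G C := by
  intro D C h
  induction h with
  | @wk Γ Δ C A hA hprem ih =>
      intro G hp
      have hmem : A ∈ G := hp.mem_iff.mp (by simp)
      obtain ⟨T1, T2, rfl⟩ := List.append_of_mem hmem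
      have core : (Γ ++ Δ).Perm (T1 ++ T2) :=
        ((List.perm_middle.symm.trans hp).trans List.perm_middle).cons_inv
      exact (ih core).wk _ hA
  | interR h1 h2 ih1 ih2 =>
      intro G hp
      exact (ih1 hp).interR (ih2 hp)
  | @interL Γ Δ A B C hprem ih =>
      intro G hp
      have hmem : Ty.inter A B ∈ G := hp.mem_iff.mp (by simp)
      obtain ⟨T1, T2, rfl⟩ := List.append_of_mem hmem
      have core : (Γ ++ Δ).Perm (T1 ++ T2) :=
        ((List.perm_middle.symm.trans hp).trans List.perm_middle).cons_inv
      have hp2 : (Γ ++ A :: B :: Δ).Perm (T1 ++ A :: B :: T2) :=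
        List.perm_middle.trans ((List.perm_middle.cons A).trans
          (((core.cons B).cons A).trans
            (((List.perm_middle.symm).cons A).trans List.perm_middle.symm)))
      exact (ih hp2).interL
  | ax x =>
      intro G hp
      rw [List.perm_singleton.mp hp.symm]; exact ISCp.ax x
  | omega =>
      intro G hp
      rw [← hp.nil_eq]; exact ISCp.omega
  | arrow l hl A B h1 h2 ih1 ih2 =>
      intro G hp
      obtain ⟨l₂, rfl, hpl⟩ := perm_map_ex _ hp l rfl
      have hl2 : l₂ ≠ [] := by
        intro h; subst h; exact hl (List.Perm.eq_nil (hpl))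
      exact ISCp.arrow l₂ hl2 A B (fun p hp' => h1 p (hpl.mem_iff.mpr hp'))
        (ih2 (hpl.map Prod.snd))
  | arrow0 A hprem ih =>
      intro G hp
      rw [← hp.nil_eq]; exact ISCp.arrow0 A hprem
  | prod l hl A B h1 h2 ih1 ih2 =>
      intro G hp
      obtain ⟨l₂, rfl, hpl⟩ := perm_map_ex _ hp l rfl
      have hl2 : l₂ ≠ [] := by
        intro h; subst h; exact hl (List.Perm.eq_nil (hpl))
      exact ISCp.prod l₂ hl2 A B (ih1 (hpl.map Prod.fst)) (ih2 (hpl.map Prod.snd))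
end ISCwork
namespace ISCwork

variable {X : Type}

/-- invertibility of interR -/
lemma interR_inv : ∀ {D : List (Ty X)} {C : Ty X}, ISCp D C →
    ∀ {A B : Ty X}, C = Ty.inter A B → ISCp D A ∧ ISCp D B := by
  intro D C h
  induction h with
  | wk A' hA' hprem ih =>
      intro A B hC
      obtain ⟨h1, h2⟩ := ih hC
      exact ⟨h1.wk _ hA', h2.wk _ hA'⟩
  | interR h1 h2 ih1 ih2 =>
      intro A B hC
      cases hC
      exact ⟨h1, h2⟩
  | interL hprem ih =>
      intro A B hC
      obtain ⟨h1, h2⟩ := ih hC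
      exact ⟨h1.interL, h2.interL⟩
  | ax x => intro A B hC; cases hC
  | omega => intro A B hC; cases hC
  | arrow l hl A' B' h1 h2 ih1 ih2 => intro A B hC; cases hC
  | arrow0 A' hprem ih => intro A B hC; cases hC
  | prod l hl A' B' h1 h2 ih1 ih2 => intro A B hC; cases hC

/-- invertibility of interL -/
lemma interL_inv : ∀ {D : List (Ty X)} {C : Ty X}, ISCp D C →
    ∀ {S1 S2 : List (Ty X)} {P Q : Ty X}, D = S1 ++ Ty.inter P Q :: S2 →
    ISCp (S1 ++ P :: Q :: S2) C := by
  intro D C h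
  induction h with
  | @wk Γ Δ C A hA hprem ih =>
      intro S1 S2 P Q hD
      rcases mid_eq hD with ⟨rfl, rfl, rfl⟩ | ⟨t, rfl, rfl⟩ | ⟨t, rfl, rfl⟩
      · exact absurd trivial hA
      · -- S1 = Γ ++ A :: t ; the inter is inside Δ = t ++ inter :: S2
        have h1 := ih (S1 := Γ ++ t) (S2 := S2) (P := P) (Q := Q) (by simp)
        have h2 : ISCp (Γ ++ (t ++ P :: Q :: S2)) C := by simpa using h1
        have := h2.wk A hA (Δ := t ++ P :: Q :: S2)
        simpa using this
      · -- Γ = S1 ++ inter :: t ; A inside S2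
        have h1 := ih (S1 := S1) (S2 := t ++ Δ) (P := P) (Q := Q) (by simp)
        have h2 : ISCp ((S1 ++ P :: Q :: t) ++ Δ) C := by simpa using h1
        have := h2.wk A hA (Γ := S1 ++ P :: Q :: t)
        simpa using this
  | interR h1 h2 ih1 ih2 =>
      intro S1 S2 P Q hD
      exact (ih1 hD).interR (ih2 hD)
  | @interL Γ Δ A B C hprem ih =>
      intro S1 S2 P Q hD
      rcases mid_eq hD with ⟨rfl, hi, rfl⟩ | ⟨t, rfl, rfl⟩ | ⟨t, rfl, rfl⟩
      · obtain ⟨rfl, rfl⟩ : A = P ∧ B = Q := by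
          cases hi; exact ⟨rfl, rfl⟩
        exact hprem
      · have h1 := ih (S1 := Γ ++ A :: B :: t) (S2 := S2) (P := P) (Q := Q) (by simp)
        have h2 : ISCp (Γ ++ A :: B :: (t ++ P :: Q :: S2)) C := by simpa using h1
        have := ISCp.interL (Γ := Γ) (Δ := t ++ P :: Q :: S2) h2
        simpa using this
      · have h1 := ih (S1 := S1) (S2 := t ++ A :: B :: Δ) (P := P) (Q := Q) (by simp)
        have h2 : ISCp ((S1 ++ P :: Q :: t) ++ A :: B :: Δ) C := by simpa using h1
        have := ISCp.interL (Γ := S1 ++ P :: Q :: t) (Δ := Δ) h2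
        simpa using this
  | ax x =>
      intro S1 S2 P Q hD
      rcases S1 with _ | ⟨c, S1⟩ <;> simp_all
  | omega => intro S1 S2 P Q hD; simp at hD
  | arrow l hl A' B' h1 h2 ih1 ih2 =>
      intro S1 S2 P Q hD
      exfalso
      have : Ty.inter P Q ∈ l.map fun p => Ty.arrow p.1 p.2 := by rw [hD]; simp
      simp at this
  | arrow0 A' hprem ih => intro S1 S2 P Q hD; simp at hD
  | prod l hl A' B' h1 h2 ih1 ih2 =>
      intro S1 S2 P Q hD
      exfalso
      have : Ty.inter P Q ∈ l.map fun p => Ty.prod p.1 p.2 := by rw [hD]; simp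
      simp at this

end ISCwork
namespace ISCwork

variable {X : Type}

lemma cancel_mid {α : Type*} {l₁ l₂ m : List α} {x : α}
    (hp : (l₁ ++ x :: l₂).Perm (x :: m)) : (l₁ ++ l₂).Perm m :=
  (List.perm_middle.symm.trans hp).cons_inv

lemma Finj : Function.Injective (fun p : Ty X × Ty X => Ty.arrow p.1 p.2) := by
  rintro ⟨a, b⟩ ⟨c, d⟩ h
  simp only [Ty.arrow.injEq] at h
  simp [h.1, h.2]

lemma Pinj : Function.Injective (fun p : Ty X × Ty X => Ty.prod p.1 p.2) := by
  rintro ⟨a, b⟩ ⟨c, d⟩ h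
  simp only [Ty.prod.injEq] at h
  simp [h.1, h.2]

/-- double occurrence extraction from a permutation -/
lemma two_of_perm {α : Type*} {f : α → Ty X} (hf : Function.Injective f)
    {l : List α} {A : Ty X} {Γ : List (Ty X)}
    (hp : (l.map f).Perm (A :: A :: Γ)) (p₁ : α) (hA : f p₁ = A) :
    ∃ l₃, l.Perm (p₁ :: p₁ :: l₃) ∧ Γ.Perm (l₃.map f) := by
  classical
  have hcnt : 2 ≤ List.count A (l.map f) := by
    rw [hp.count_eq]; simp
  rw [← hA, List.count_map_of_injective l f hf] at hcnt
  have hmem : p₁ ∈ l := List.count_pos_iff.mp (by omega)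
  have hmem2 : p₁ ∈ l.erase p₁ := by
    have := List.count_erase_self (a := p₁) (l := l)
    exact List.count_pos_iff.mp (by omega)
  refine ⟨(l.erase p₁).erase p₁,
    (List.perm_cons_erase hmem).trans ((List.perm_cons_erase hmem2).cons p₁), ?_⟩
  have h2 : (A :: A :: Γ).Perm (A :: A :: ((l.erase p₁).erase p₁).map f) := by
    have := ((List.perm_cons_erase hmem).trans
      ((List.perm_cons_erase hmem2).cons p₁)).map f
    simpa [hA] using hp.symm.trans this
  exact h2.cons_inv.cons_inv

/-- contraction, with an explicit size bound for recursion -/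
lemma ctr_aux : ∀ (n : ℕ) (A : Ty X), tsz A ≤ n → ∀ {D : List (Ty X)} {C : Ty X},
    ISCp D C → ∀ {Γ : List (Ty X)}, D.Perm (A :: A :: Γ) → ISCp (A :: Γ) C := by
  intro n
  induction n with
  | zero => intro A hA; have := sz_pos A; omega
  | succ n ihn =>
    intro A hA D C h
    induction h with
    | @wk Γ₀ Δ₀ C B hB hprem ih =>
        intro Γ hp
        by_cases hBA : B = A
        · subst hBA
          exact exch hprem (cancel_mid hp)
        · have hBm : B = A ∨ B = A ∨ B ∈ Γ := by
            simpa using hp.mem_iff.mp (show B ∈ Γ₀ ++ B :: Δ₀ by simp)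
          have hBΓ : B ∈ Γ := by tauto
          obtain ⟨T1, T2, rfl⟩ := List.append_of_mem hBΓ
          have core : (Γ₀ ++ Δ₀).Perm (A :: A :: (T1 ++ T2)) :=
            cancel_mid (hp.trans (List.perm_middle (l₁ := A :: A :: T1)))
          have d := ih core
          have := weakI B (S1 := A :: T1) (S2 := T2) (by simpa using d)
          simpa using this
    | interR h1 h2 ih1 ih2 =>
        intro Γ hp
        exact (ih1 hp).interR (ih2 hp)
    | @interL Γ₀ Δ₀ P Q C hprem ih =>
        intro Γ hp
        by_cases hPQ : Ty.inter P Q = A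
        · subst hPQ
          have core : (Γ₀ ++ Δ₀).Perm (Ty.inter P Q :: Γ) := cancel_mid hp
          have e1 : (Γ₀ ++ P :: Q :: Δ₀).Perm (P :: Q :: Ty.inter P Q :: Γ) :=
            List.perm_middle.trans ((List.perm_middle.cons P).trans ((core.cons Q).cons P))
          have d1 : ISCp ([P, Q] ++ Ty.inter P Q :: Γ) C := exch hprem e1
          have d2 : ISCp (P :: Q :: P :: Q :: Γ) C := by
            simpa using interL_inv d1 (S1 := [P, Q]) rfl
          have d3 : ISCp (P :: P :: Q :: Q :: Γ) C :=
            exch d2 ((List.Perm.swap P Q (Q :: Γ)).cons P)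
          have hsz : tsz P ≤ n ∧ tsz Q ≤ n := by
            simp [tsz] at hA; omega
          have d4 : ISCp (P :: Q :: Q :: Γ) C := ihn P hsz.1 d3 (List.Perm.refl _)
          have d5 : ISCp (Q :: Q :: P :: Γ) C :=
            exch d4 (List.perm_middle (l₁ := [Q, Q]) (a := P)).symm
          have d6 : ISCp (Q :: P :: Γ) C := ihn Q hsz.2 d5 (List.Perm.refl _)
          have d7 : ISCp (P :: Q :: Γ) C := exch d6 (List.Perm.swap P Q Γ)
          exact ISCp.interL (Γ := []) d7
        · have hm0 : Ty.inter P Q = A ∨ Ty.inter P Q = A ∨ Ty.inter P Q ∈ Γ := by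
            simpa using hp.mem_iff.mp (show Ty.inter P Q ∈ Γ₀ ++ Ty.inter P Q :: Δ₀ by simp)
          have hm : Ty.inter P Q ∈ Γ := by tauto
          obtain ⟨T1, T2, rfl⟩ := List.append_of_mem hm
          have core : (Γ₀ ++ Δ₀).Perm (A :: A :: (T1 ++ T2)) :=
            cancel_mid (hp.trans (List.perm_middle (l₁ := A :: A :: T1)))
          have e1 : (Γ₀ ++ P :: Q :: Δ₀).Perm (A :: A :: (T1 ++ P :: Q :: T2)) := by
            refine (List.perm_middle.trans ((List.perm_middle.cons P).trans
              ((core.cons Q).cons P))).trans ?_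
            refine ((List.perm_middle (l₁ := A :: A :: T1) (a := P)).trans
              ((List.perm_middle (l₁ := A :: A :: T1) (a := Q)).cons P)).symm
          have d := ih e1
          have := ISCp.interL (Γ := A :: T1) (Δ := T2) (A := P) (B := Q) (by simpa using d)
          simpa using this
    | ax x =>
        intro Γ hp
        have := hp.length_eq; simp at this
    | omega =>
        intro Γ hp
        have := hp.nil_eq; simp at this
    | arrow l hl A' B' h1 h2 ih1 ih2 =>
        intro Γ hp
        have hAm : A ∈ (l.map fun p => Ty.arrow p.1 p.2) := hp.mem_iff.mpr (by simp)
        obtain ⟨p₁, hp₁l, hA1⟩ := List.mem_map.mp hAm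
        obtain ⟨l₃, hpl, hΓ⟩ := two_of_perm Finj hp p₁ hA1
        have hsz2 : tsz p₁.2 ≤ n := by
          rw [← hA1] at hA; simp [tsz] at hA; omega
        have dsnd : ISCp (p₁.2 :: l₃.map Prod.snd) B' :=
          ihn p₁.2 hsz2 h2 (by simpa using hpl.map Prod.snd)
        have harr : ISCp ((p₁ :: l₃).map fun p => Ty.arrow p.1 p.2) (Ty.arrow A' B') := by
          refine ISCp.arrow (p₁ :: l₃) (by simp) A' B' ?_ (by simpa using dsnd)
          intro q hq
          rcases List.mem_cons.mp hq with rfl | hq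
          · exact h1 q hp₁l
          · exact h1 q (hpl.mem_iff.mpr (by simp [hq]))
        refine exch harr ?_
        simp only [List.map_cons, hA1]
        exact (hΓ.symm.cons A)
    | arrow0 A' hprem ih =>
        intro Γ hp
        have := hp.nil_eq; simp at this
    | prod l hl A' B' h1 h2 ih1 ih2 =>
        intro Γ hp
        have hAm : A ∈ (l.map fun p => Ty.prod p.1 p.2) := hp.mem_iff.mpr (by simp)
        obtain ⟨p₁, hp₁l, hA1⟩ := List.mem_map.mp hAm
        obtain ⟨l₃, hpl, hΓ⟩ := two_of_perm Pinj hp p₁ hA1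
        have hsz : tsz p₁.1 ≤ n ∧ tsz p₁.2 ≤ n := by
          rw [← hA1] at hA; simp [tsz] at hA; omega
        have dfst : ISCp (p₁.1 :: l₃.map Prod.fst) A' :=
          ihn p₁.1 hsz.1 h1 (by simpa using hpl.map Prod.fst)
        have dsnd : ISCp (p₁.2 :: l₃.map Prod.snd) B' :=
          ihn p₁.2 hsz.2 h2 (by simpa using hpl.map Prod.snd)
        have hpr : ISCp ((p₁ :: l₃).map fun p => Ty.prod p.1 p.2) (Ty.prod A' B') :=
          ISCp.prod (p₁ :: l₃) (by simp) A' B' (by simpa using dfst) (by simpa using dsnd)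
        refine exch hpr ?_
        simp only [List.map_cons, hA1]
        exact (hΓ.symm.cons A)

/-- contraction -/
lemma ctr (A : Ty X) {DD : List (Ty X)} {D : Ty X} (h : ISCp DD D) {Γ : List (Ty X)}
    (hp : DD.Perm (A :: A :: Γ)) : ISCp (A :: Γ) D :=
  ctr_aux (tsz A) A le_rfl h hp

/-- contraction of a whole list -/
lemma ctrL : ∀ (G : List (Ty X)) {D : List (Ty X)} {C : Ty X} {S : List (Ty X)},
    ISCp D C → D.Perm (G ++ G ++ S) → ISCp (G ++ S) C := by
  intro G
  induction G with
  | nil => intro D C S h hp; simpa using exch h (by simpa using hp)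
  | cons B G ih =>
      intro D C S h hp
      have e : ((B :: G) ++ (B :: G) ++ S).Perm (B :: B :: (G ++ (G ++ S))) := by
        simpa using ((List.perm_middle (l₁ := G) (a := B) (l₂ := G ++ S)).cons B)
      have d1 : ISCp (B :: (G ++ (G ++ S))) C := ctr B h (hp.trans e)
      have d2 : ISCp (G ++ (B :: S)) C := by
        refine ih d1 ?_
        have : (B :: (G ++ G ++ S)).Perm (G ++ G ++ B :: S) :=
          (List.perm_middle (l₁ := G ++ G) (a := B) (l₂ := S)).symm
        simpa using this
      have : (G ++ B :: S).Perm (B :: (G ++ S)) := List.perm_middle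
      simpa using exch d2 this

end ISCwork
namespace ISCwork

variable {X : Type}

lemma map_mid {α β : Type*} (f : α → β) : ∀ {l : List α} {D₁ D₂ : List β} {x : β},
    l.map f = D₁ ++ x :: D₂ →
    ∃ lf p lb, l = lf ++ p :: lb ∧ lf.map f = D₁ ∧ f p = x ∧ lb.map f = D₂ := by
  intro l
  induction l with
  | nil => intro D₁ D₂ x h; simp at h
  | cons a l ih =>
      intro D₁ D₂ x h
      cases D₁ with
      | nil =>
          simp only [List.map_cons, List.nil_append, List.cons.injEq] at h
          exact ⟨[], a, l, by simp, by simp, h.1, h.2⟩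
      | cons d D₁ =>
          simp only [List.map_cons, List.cons_append, List.cons.injEq] at h
          obtain ⟨lf, p, lb, h1, h2, h3, h4⟩ := ih h.2
          exact ⟨a :: lf, p, lb, by simp [h1], by simp [h2, h.1], h3, h4⟩

/-- cut admissibility, with a size bound for recursion -/
lemma cut_aux : ∀ (n : ℕ) (A : Ty X), tsz A ≤ n → ∀ {D : List (Ty X)} {C : Ty X},
    ISCp D C → ∀ (D₁ D₂ Γ : List (Ty X)), D = D₁ ++ A :: D₂ → ISCp Γ A →
    ISCp (D₁ ++ Γ ++ D₂) C := by
  intro n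
  induction n with
  | zero => intro A hA; have := sz_pos A; omega
  | succ n ihn =>
    intro A hA D C h
    induction h with
    | @wk Γ₀ Δ₀ C B hB hprem ih =>
        intro D₁ D₂ Γ hD hL
        rcases mid_eq hD with ⟨rfl, rfl, rfl⟩ | ⟨t, rfl, rfl⟩ | ⟨t, rfl, rfl⟩
        · exact weakL Γ hprem
        · have d := ih (Γ₀ ++ t) D₂ Γ (by simp) hL
          have d2 : ISCp (Γ₀ ++ (t ++ Γ ++ D₂)) C := by simpa using d
          have := d2.wk B hB (Γ := Γ₀) (Δ := t ++ Γ ++ D₂)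
          simpa using this
        · have d := ih D₁ (t ++ Δ₀) Γ (by simp) hL
          have d2 : ISCp ((D₁ ++ Γ ++ t) ++ Δ₀) C := by simpa using d
          have := d2.wk B hB (Γ := D₁ ++ Γ ++ t) (Δ := Δ₀)
          simpa using this
    | interR h1 h2 ih1 ih2 =>
        intro D₁ D₂ Γ hD hL
        exact (ih1 _ _ _ hD hL).interR (ih2 _ _ _ hD hL)
    | @interL Γ₀ Δ₀ P Q C hprem ih =>
        intro D₁ D₂ Γ hD hL
        rcases mid_eq hD with ⟨rfl, hi, rfl⟩ | ⟨t, rfl, rfl⟩ | ⟨t, rfl, rfl⟩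
        · obtain ⟨hP, hQ⟩ := interR_inv hL hi.symm
          have hsz : tsz P ≤ n ∧ tsz Q ≤ n := by
            rw [← hi] at hA; simp [tsz] at hA; omega
          have c1 := ihn Q hsz.2 hprem (Γ₀ ++ [P]) Δ₀ Γ (by simp) hQ
          have c2 := ihn P hsz.1 c1 Γ₀ (Γ ++ Δ₀) Γ (by simp) hP
          -- c2 : ISCp (Γ₀ ++ Γ ++ (Γ ++ Δ₀)) C ; contract the two copies of Γ
          have e : (Γ₀ ++ Γ ++ (Γ ++ Δ₀)).Perm (Γ ++ Γ ++ (Γ₀ ++ Δ₀)) := by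
            have e1 : (Γ₀ ++ (Γ ++ Γ ++ Δ₀)).Perm ((Γ ++ Γ ++ Δ₀) ++ Γ₀) :=
              List.perm_append_comm
            have e2 : ((Γ ++ Γ) ++ (Δ₀ ++ Γ₀)).Perm ((Γ ++ Γ) ++ (Γ₀ ++ Δ₀)) :=
              List.Perm.append_left _ List.perm_append_comm
            have := e1.trans (by simpa [List.append_assoc] using e2)
            simpa [List.append_assoc] using this
          have d := ctrL Γ c2 e
          refine exch d ?_
          have e3 : ((Γ ++ Γ₀) ++ Δ₀).Perm ((Γ₀ ++ Γ) ++ Δ₀) :=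
            List.Perm.append_right _ List.perm_append_comm
          simpa [List.append_assoc] using e3
        · have d := ih (Γ₀ ++ P :: Q :: t) D₂ Γ (by simp) hL
          have d2 : ISCp (Γ₀ ++ P :: Q :: (t ++ Γ ++ D₂)) C := by simpa using d
          have := ISCp.interL (Γ := Γ₀) (Δ := t ++ Γ ++ D₂) d2
          simpa using this
        · have d := ih D₁ (t ++ P :: Q :: Δ₀) Γ (by simp) hL
          have d2 : ISCp ((D₁ ++ Γ ++ t) ++ P :: Q :: Δ₀) C := by simpa using d
          have := ISCp.interL (Γ := D₁ ++ Γ ++ t) (Δ := Δ₀) d2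
          simpa using this
    | ax x =>
        intro D₁ D₂ Γ hD hL
        rcases D₁ with _ | ⟨c, D₁⟩
        · simp only [List.nil_append, List.cons.injEq] at hD
          obtain ⟨rfl, rfl⟩ := hD
          simpa using hL
        · simp only [List.cons_append, List.cons.injEq] at hD
          exact absurd hD.2 (by simp)
    | omega => intro D₁ D₂ Γ hD hL; simp at hD
    | arrow l hl A' B' h1 h2 ih1 ih2 =>
        intro D₁ D₂ Γ hD hL
        obtain ⟨lf, p₁, lb, rfl, rfl, hFp, rfl⟩ := map_mid _ hD
        rw [← hFp] at hA hL
        have hsz : tsz p₁.1 ≤ n ∧ tsz p₁.2 ≤ n := by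
          simp [tsz] at hA; omega
        have h2' : ISCp (lf.map Prod.snd ++ p₁.2 :: lb.map Prod.snd) B' := by
          simpa using h2
        have hmem₁ : p₁ ∈ lf ++ p₁ :: lb := by simp
        clear ih1 ih2 hD
        -- inner induction on the left derivation
        suffices key : ∀ {Γ₀ : List (Ty X)} {T : Ty X}, ISCp Γ₀ T →
            T = Ty.arrow p₁.1 p₁.2 →
            ISCp ((lf.map fun p => Ty.arrow p.1 p.2) ++ Γ₀ ++
              (lb.map fun p => Ty.arrow p.1 p.2)) (Ty.arrow A' B') by
          exact key hL rfl
        intro Γ₀ T hLd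
        induction hLd with
        | @wk G1 G2 T B₀ hB₀ hp ihw =>
            intro hT
            have d := ihw hT
            have d2 : ISCp ((lf.map fun p => Ty.arrow p.1 p.2) ++ G1 ++
                (G2 ++ lb.map fun p => Ty.arrow p.1 p.2)) (Ty.arrow A' B') := by
              simpa [List.append_assoc] using d
            have := d2.wk B₀ hB₀ (Γ := (lf.map fun p => Ty.arrow p.1 p.2) ++ G1)
            simpa [List.append_assoc] using this
        | interR _ _ _ _ => intro hT; cases hT
        | @interL G1 G2 P Q T hp ihw =>
            intro hT
            have d := ihw hT
            have d2 : ISCp (((lf.map fun p => Ty.arrow p.1 p.2) ++ G1) ++ P :: Q ::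
                (G2 ++ lb.map fun p => Ty.arrow p.1 p.2)) (Ty.arrow A' B') := by
              simpa [List.append_assoc] using d
            have := d2.interL
            simpa [List.append_assoc] using this
        | ax x => intro hT; cases hT
        | omega => intro hT; cases hT
        | @arrow lL hlL A₀ B₀ g1 g2 _ _ =>
            intro hT
            obtain ⟨rfl, rfl⟩ : A₀ = p₁.1 ∧ B₀ = p₁.2 := by
              cases hT; exact ⟨rfl, rfl⟩
            have cutfst : ∀ q ∈ lL, ISCp [A'] q.1 := by
              intro q hq
              have := ihn p₁.1 hsz.1 (g1 q hq) [] [] [A'] (by simp) (h1 p₁ hmem₁)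
              simpa using this
            have cutsnd : ISCp (lf.map Prod.snd ++ lL.map Prod.snd ++ lb.map Prod.snd) B' :=
              ihn p₁.2 hsz.2 h2' (lf.map Prod.snd) (lb.map Prod.snd) (lL.map Prod.snd)
                rfl g2
            have harr := ISCp.arrow (lf ++ lL ++ lb) (by simp [hlL]) A' B'
              (by
                intro q hq
                simp only [List.mem_append] at hq
                rcases hq with (hq | hq) | hq
                · exact h1 q (by simp [hq])
                · exact cutfst q hq
                · exact h1 q (by simp [hq]))
              (by simpa using cutsnd)
            simpa [List.append_assoc] using harr
        | @arrow0 A₀ B₀ hp _ =>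
            intro hT
            obtain ⟨rfl, rfl⟩ : A₀ = p₁.1 ∧ B₀ = p₁.2 := by
              cases hT; exact ⟨rfl, rfl⟩
            have cutsnd : ISCp (lf.map Prod.snd ++ [] ++ lb.map Prod.snd) B' :=
              ihn p₁.2 hsz.2 h2' (lf.map Prod.snd) (lb.map Prod.snd) [] rfl hp
            rcases hnil : lf ++ lb with _ | ⟨q, rest⟩
            · have hlf : lf = [] := by cases lf <;> simp_all
              have hlb : lb = [] := by cases lf <;> simp_all
              subst hlf; subst hlb
              have : ISCp [] B' := by simpa using cutsnd
              simpa using ISCp.arrow0 A' this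
            · have harr := ISCp.arrow (lf ++ lb) (by simp [hnil]) A' B'
                (by
                  intro q' hq
                  simp only [List.mem_append] at hq
                  rcases hq with hq | hq
                  · exact h1 q' (by simp [hq])
                  · exact h1 q' (by simp [hq]))
                (by simpa using cutsnd)
              simpa [List.append_assoc] using harr
        | prod _ _ _ _ _ _ _ _ => intro hT; cases hT
    | arrow0 A' hp ih => intro D₁ D₂ Γ hD hL; simp at hD
    | prod l hl A' B' h1 h2 ih1 ih2 =>
        intro D₁ D₂ Γ hD hL
        obtain ⟨lf, p₁, lb, rfl, rfl, hFp, rfl⟩ := map_mid _ hD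
        rw [← hFp] at hA hL
        have hsz : tsz p₁.1 ≤ n ∧ tsz p₁.2 ≤ n := by
          simp [tsz] at hA; omega
        have h1' : ISCp (lf.map Prod.fst ++ p₁.1 :: lb.map Prod.fst) A' := by
          simpa using h1
        have h2' : ISCp (lf.map Prod.snd ++ p₁.2 :: lb.map Prod.snd) B' := by
          simpa using h2
        clear ih1 ih2 hD
        suffices key : ∀ {Γ₀ : List (Ty X)} {T : Ty X}, ISCp Γ₀ T →
            T = Ty.prod p₁.1 p₁.2 →
            ISCp ((lf.map fun p => Ty.prod p.1 p.2) ++ Γ₀ ++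
              (lb.map fun p => Ty.prod p.1 p.2)) (Ty.prod A' B') by
          exact key hL rfl
        intro Γ₀ T hLd
        induction hLd with
        | @wk G1 G2 T B₀ hB₀ hp ihw =>
            intro hT
            have d := ihw hT
            have d2 : ISCp ((lf.map fun p => Ty.prod p.1 p.2) ++ G1 ++
                (G2 ++ lb.map fun p => Ty.prod p.1 p.2)) (Ty.prod A' B') := by
              simpa [List.append_assoc] using d
            have := d2.wk B₀ hB₀ (Γ := (lf.map fun p => Ty.prod p.1 p.2) ++ G1)
            simpa [List.append_assoc] using this
        | interR _ _ _ _ => intro hT; cases hT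
        | @interL G1 G2 P Q T hp ihw =>
            intro hT
            have d := ihw hT
            have d2 : ISCp (((lf.map fun p => Ty.prod p.1 p.2) ++ G1) ++ P :: Q ::
                (G2 ++ lb.map fun p => Ty.prod p.1 p.2)) (Ty.prod A' B') := by
              simpa [List.append_assoc] using d
            have := d2.interL
            simpa [List.append_assoc] using this
        | ax x => intro hT; cases hT
        | omega => intro hT; cases hT
        | arrow _ _ _ _ _ _ _ _ => intro hT; cases hT
        | arrow0 _ _ _ => intro hT; cases hT
        | @prod lL hlL A₀ B₀ g1 g2 _ _ =>
            intro hT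
            obtain ⟨rfl, rfl⟩ : A₀ = p₁.1 ∧ B₀ = p₁.2 := by
              cases hT; exact ⟨rfl, rfl⟩
            have cutfst : ISCp (lf.map Prod.fst ++ lL.map Prod.fst ++ lb.map Prod.fst) A' :=
              ihn p₁.1 hsz.1 h1' (lf.map Prod.fst) (lb.map Prod.fst) (lL.map Prod.fst)
                rfl g1
            have cutsnd : ISCp (lf.map Prod.snd ++ lL.map Prod.snd ++ lb.map Prod.snd) B' :=
              ihn p₁.2 hsz.2 h2' (lf.map Prod.snd) (lb.map Prod.snd) (lL.map Prod.snd)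
                rfl g2
            have hpr := ISCp.prod (lf ++ lL ++ lb) (by simp [hlL]) A' B'
              (by simpa using cutfst) (by simpa using cutsnd)
            simpa [List.append_assoc] using hpr

/-- cut -/
lemma cut {A : Ty X} {D₁ D₂ Γ : List (Ty X)} {C : Ty X}
    (hL : ISCp Γ A) (hR : ISCp (D₁ ++ A :: D₂) C) : ISCp (D₁ ++ Γ ++ D₂) C :=
  cut_aux (tsz A) A le_rfl hR D₁ D₂ Γ rfl hL

end ISCwork
namespace ISCwork

variable {X : Type}

/-- identity sequents -/
lemma reflP : ∀ A : Ty X, ISCp [A] A := by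
  intro A
  induction A with
  | base x => exact ISCp.ax x
  | omega => exact weakI Ty.omega (S1 := []) (S2 := []) ISCp.omega
  | inter P Q ihP ihQ =>
      have hP : ISCp [P, Q] P := weakI Q (S1 := [P]) (S2 := []) ihP
      have hQ : ISCp [P, Q] Q := weakI P (S1 := []) (S2 := [Q]) ihQ
      exact ISCp.interL (Γ := []) (hP.interR hQ)
  | arrow a b iha ihb =>
      have := ISCp.arrow [(a, b)] (by simp) a b (by simpa using iha) (by simpa using ihb)
      simpa using this
  | prod a b iha ihb =>
      have := ISCp.prod [(a, b)] (by simp) a b (by simpa using iha) (by simpa using ihb)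
      simpa using this

/-- completeness of ISC with respect to BCD -/
lemma compl {A B : Ty X} (h : BCD A B) : ISCp [A] B := by
  induction h with
  | refl A => exact reflP A
  | trans h1 h2 ih1 ih2 =>
      have := cut (D₁ := []) (D₂ := []) ih1 (by simpa using ih2)
      simpa using this
  | omega A => exact weakI A (S1 := []) (S2 := []) ISCp.omega
  | inter_l1 A B =>
      exact ISCp.interL (Γ := []) (weakI B (S1 := [A]) (S2 := []) (reflP A))
  | inter_l2 A B =>
      exact ISCp.interL (Γ := []) (weakI A (S1 := []) (S2 := [B]) (reflP B))
  | inter_dup A => exact (reflP A).interR (reflP A)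
  | @inter_mono A B C D h1 h2 ih1 ih2 =>
      have hC : ISCp [A, B] C := weakI B (S1 := [A]) (S2 := []) ih1
      have hD : ISCp [A, B] D := weakI A (S1 := []) (S2 := [B]) ih2
      exact ISCp.interL (Γ := []) (hC.interR hD)
  | @arrow_mono A B C D h1 h2 ih1 ih2 =>
      have := ISCp.arrow [(A, B)] (by simp) C D (by simpa using ih1) (by simpa using ih2)
      simpa using this
  | arrow_inter A B C =>
      have h2 : ISCp [B, C] (Ty.inter B C) :=
        (weakI C (S1 := [B]) (S2 := []) (reflP B)).interR
          (weakI B (S1 := []) (S2 := [C]) (reflP C))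
      have := ISCp.arrow [(A, B), (A, C)] (by simp) A (Ty.inter B C)
        (by
          intro p hp
          have hp' : p = (A, B) ∨ p = (A, C) := by simpa using hp
          rcases hp' with rfl | rfl <;> exact reflP A)
        (by simpa using h2)
      exact ISCp.interL (Γ := []) (by simpa using this)
  | omega_arrow =>
      exact weakI Ty.omega (S1 := []) (S2 := [])
        (ISCp.arrow0 Ty.omega ISCp.omega)
  | @prod_mono A B C D h1 h2 ih1 ih2 =>
      have := ISCp.prod [(A, B)] (by simp) C D (by simpa using ih1) (by simpa using ih2)
      simpa using this
  | prod_inter A B C D =>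
      have hf : ISCp [A, C] (Ty.inter A C) :=
        (weakI C (S1 := [A]) (S2 := []) (reflP A)).interR
          (weakI A (S1 := []) (S2 := [C]) (reflP C))
      have hs : ISCp [B, D] (Ty.inter B D) :=
        (weakI D (S1 := [B]) (S2 := []) (reflP B)).interR
          (weakI B (S1 := []) (S2 := [D]) (reflP D))
      have := ISCp.prod [(A, B), (C, D)] (by simp) (Ty.inter A C) (Ty.inter B D)
        (by simpa using hf) (by simpa using hs)
      exact ISCp.interL (Γ := []) (by simpa using this)

/- ---------- soundness ---------- -/

lemma il_cons_ne {G : Ty X} {t : List (Ty X)} (h : t ≠ []) :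
    interList (G :: t) = Ty.inter G (interList t) := by
  cases t with
  | nil => simp at h
  | cons a t => rfl

lemma bcd_head (G : Ty X) (t : List (Ty X)) : BCD (interList (G :: t)) G := by
  cases t with
  | nil => exact BCD.refl G
  | cons a t => exact BCD.inter_l1 _ _

lemma bcd_tail (G : Ty X) (t : List (Ty X)) : BCD (interList (G :: t)) (interList t) := by
  cases t with
  | nil => exact BCD.omega _
  | cons a t => exact BCD.inter_l2 _ _

lemma bcd_pair {D G : Ty X} {t : List (Ty X)} (h1 : BCD D G) (h2 : BCD D (interList t)) :
    BCD D (interList (G :: t)) := by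
  cases t with
  | nil => exact h1
  | cons a t => exact (BCD.inter_dup D).trans (BCD.inter_mono h1 h2)

lemma bcd_wk : ∀ (S1 : List (Ty X)) (B : Ty X) (S2 : List (Ty X)),
    BCD (interList (S1 ++ B :: S2)) (interList (S1 ++ S2)) := by
  intro S1
  induction S1 with
  | nil => intro B S2; exact bcd_tail B S2
  | cons G S1 ih =>
      intro B S2
      exact bcd_pair (bcd_head _ _) ((bcd_tail _ _).trans (ih B S2))

lemma bcd_interL : ∀ (S1 : List (Ty X)) (P Q : Ty X) (S2 : List (Ty X)),
    BCD (interList (S1 ++ Ty.inter P Q :: S2)) (interList (S1 ++ P :: Q :: S2)) := by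
  intro S1
  induction S1 with
  | nil =>
      intro P Q S2
      refine bcd_pair ((bcd_head _ _).trans (BCD.inter_l1 _ _)) ?_
      refine bcd_pair ((bcd_head _ _).trans (BCD.inter_l2 _ _)) ?_
      exact bcd_tail _ _
  | cons G S1 ih =>
      intro P Q S2
      exact bcd_pair (bcd_head _ _) ((bcd_tail _ _).trans (ih P Q S2))

lemma bcd_arrow_list : ∀ (l : List (Ty X × Ty X)), l ≠ [] → ∀ (A : Ty X),
    (∀ p ∈ l, BCD A p.1) →
    BCD (interList (l.map fun p => Ty.arrow p.1 p.2))
      (Ty.arrow A (interList (l.map Prod.snd))) := by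
  intro l
  induction l with
  | nil => intro h; simp at h
  | cons p l ih =>
      intro _ A hall
      cases l with
      | nil =>
          simpa [interList] using BCD.arrow_mono (hall p (by simp)) (BCD.refl p.2)
      | cons q t =>
          have step1 : BCD (interList ((p :: q :: t).map fun p => Ty.arrow p.1 p.2))
              (Ty.inter (Ty.arrow A p.2)
                (Ty.arrow A (interList ((q :: t).map Prod.snd)))) := by
            have h1 : BCD (Ty.arrow p.1 p.2) (Ty.arrow A p.2) :=
              BCD.arrow_mono (hall p (by simp)) (BCD.refl p.2)
            have h2 := ih (by simp) A (fun r hr => hall r (by simp [hr]))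
            exact BCD.inter_mono h1 h2
          refine step1.trans ?_
          exact BCD.arrow_inter A p.2 (interList ((q :: t).map Prod.snd))

lemma bcd_prod_list : ∀ (l : List (Ty X × Ty X)), l ≠ [] →
    BCD (interList (l.map fun p => Ty.prod p.1 p.2))
      (Ty.prod (interList (l.map Prod.fst)) (interList (l.map Prod.snd))) := by
  intro l
  induction l with
  | nil => intro h; simp at h
  | cons p l ih =>
      intro _
      cases l with
      | nil => simpa [interList] using BCD.refl (Ty.prod p.1 p.2)
      | cons q t =>
          have h2 := ih (by simp)
          have step1 : BCD (interList ((p :: q :: t).map fun p => Ty.prod p.1 p.2))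
              (Ty.inter (Ty.prod p.1 p.2)
                (Ty.prod (interList ((q :: t).map Prod.fst))
                  (interList ((q :: t).map Prod.snd)))) :=
            BCD.inter_mono (BCD.refl _) h2
          exact step1.trans (BCD.prod_inter _ _ _ _)

/-- soundness of ISC with respect to BCD -/
lemma sound : ∀ {D : List (Ty X)} {C : Ty X}, ISCp D C → BCD (interList D) C := by
  intro D C h
  induction h with
  | @wk Γ Δ C A hA hprem ih => exact (bcd_wk Γ A Δ).trans ih
  | interR h1 h2 ih1 ih2 => exact (BCD.inter_dup _).trans (BCD.inter_mono ih1 ih2)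
  | @interL Γ Δ A B C hprem ih => exact (bcd_interL Γ A B Δ).trans ih
  | ax x => exact BCD.refl _
  | omega => exact BCD.refl _
  | arrow l hl A B h1 h2 ih1 ih2 =>
      have := bcd_arrow_list l hl A (fun p hp => by simpa [interList] using ih1 p hp)
      exact this.trans (BCD.arrow_mono (BCD.refl A) ih2)
  | arrow0 A hprem ih =>
      exact BCD.omega_arrow.trans (BCD.arrow_mono (BCD.omega A) ih)
  | prod l hl A B h1 h2 ih1 ih2 =>
      exact (bcd_prod_list l hl).trans (BCD.prod_mono ih1 ih2)

end ISCwork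

/-- Equivalence of the instantiated ISC system with BCD subtyping extended
to products: `A ⊢ B` is derivable in ISC iff `A ≤ B` in BCD with products. -/
theorem ISCp_iff_BCD {X : Type} [Countable X] (A B : Ty X) :
    ISCp [A] B ↔ BCD A B := by
  constructor
  · intro h
    simpa [interList] using ISCwork.sound h
  · exact ISCwork.compl
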